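/- For integers k, j ≥ 1 and μ > −1, z ∂/∂z Q^μ_{k,j}(z,w) − k Q^μ_{k,j}(z,w) = (kj/(μ+1)) Q^{μ+1}_{k−1,j−1}(z,w); and for integers k, j ≥ 0 and μ > 0, (1−zw) z ∂/∂z Q^μ_{k,j}(z,w) + [(j+1)(1−zw) − μ zw] Q^μ_{k,j}(z,w) = −μ Q^{μ−1}_{k+1,j+1}(z,w). These are identities of bivariate polynomials in (z,w). -/

import Mathlib

section Helpers
open Polynomial

noncomputable def jpc (α β : ℝ) (n i : ℕ) : ℝ :=
  (n.factorial : ℝ)⁻¹ * (n.choose i : ℝ) *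
    (ascPochhammer ℝ (n - i)).eval ((i : ℝ) + α + 1) *
    (ascPochhammer ℝ i).eval ((n : ℝ) + α + β + 1)

noncomputable def jp (α β : ℝ) (n : ℕ) : Polynomial ℝ :=
  ∑ i ∈ Finset.range (n + 1), Polynomial.C (jpc α β n i) * Polynomial.X ^ i

lemma jp_coeff (α β : ℝ) (n i : ℕ) :
    (jp α β n).coeff i = if i ≤ n then jpc α β n i else 0 := by
  rw [jp, Polynomial.finset_sum_coeff]
  simp only [Polynomial.coeff_C_mul, Polynomial.coeff_X_pow, mul_ite, mul_one, mul_zero]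
  rw [Finset.sum_ite_eq (Finset.range (n+1)) i (fun m => jpc α β n m)]
  simp [Nat.lt_succ_iff]

lemma jpc_zero_of_gt (α β : ℝ) (n i : ℕ) (h : n < i) : jpc α β n i = 0 := by
  simp [jpc, Nat.choose_eq_zero_of_lt h]

lemma poch_succ_left (m : ℕ) (x : ℝ) :
    (ascPochhammer ℝ (m+1)).eval x = x * (ascPochhammer ℝ m).eval (x + 1) := by
  rw [ascPochhammer_succ_left]
  simp [Polynomial.eval_comp]

lemma poch_succ_right (m : ℕ) (x : ℝ) :
    (ascPochhammer ℝ (m+1)).eval x = (ascPochhammer ℝ m).eval x * (x + m) := by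
  rw [ascPochhammer_succ_right]
  simp

lemma poch_pos (m : ℕ) (x : ℝ) (hx : 0 < x) : 0 < (ascPochhammer ℝ m).eval x :=
  ascPochhammer_pos m x hx




lemma fac_succ_inv (n : ℕ) : (((n+1).factorial : ℝ))⁻¹ * ((n:ℝ)+1) = ((n.factorial : ℝ))⁻¹ := by
  rw [Nat.factorial_succ]
  have h1 : ((n.factorial : ℝ)) ≠ 0 := Nat.cast_ne_zero.mpr n.factorial_ne_zero
  have h2 : ((n:ℝ)+1) ≠ 0 := by positivity
  push_cast
  field_simp

lemma key1 (μ β : ℝ) (n i : ℕ) (h : i < n) :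
    ((i:ℝ)+1) * jpc μ β n (i+1) + ((i:ℝ) - n) * jpc μ β n i
      = ((n:ℝ)+β) * jpc (μ+1) β (n-1) i := by
  have hn : 1 ≤ n := le_trans (Nat.succ_le_succ (Nat.zero_le i)) h
  have h1 : n - (i+1) = n - 1 - i := by omega
  have h2 : n - i = (n - 1 - i) + 1 := by omega
  set A := (ascPochhammer ℝ (n-1-i)).eval ((i:ℝ)+μ+2) with hA
  set P := (ascPochhammer ℝ i).eval ((n:ℝ)+μ+β+1) with hP
  set F := ((n.factorial : ℝ))⁻¹ with hF
  have e1 : (ascPochhammer ℝ (n-(i+1))).eval (((i+1:ℕ):ℝ) + μ + 1) = A := by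
    rw [h1, hA]; congr 1; push_cast; ring
  have e2 : (ascPochhammer ℝ (i+1)).eval ((n:ℝ) + μ + β + 1)
      = P * ((n:ℝ)+μ+β+1+i) := by rw [poch_succ_right, hP]
  have e3 : (ascPochhammer ℝ (n-i)).eval ((i:ℝ) + μ + 1)
      = ((i:ℝ)+μ+1) * A := by
    rw [h2, poch_succ_left, hA]; congr 2; ring
  have e4 : (ascPochhammer ℝ ((n-1) - i)).eval ((i:ℝ) + (μ+1) + 1) = A := by
    rw [hA]; congr 1; ring
  have e5 : (ascPochhammer ℝ i).eval (((n-1:ℕ):ℝ) + (μ+1) + β + 1) = P := by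
    rw [hP]; congr 1; rw [Nat.cast_sub hn]; ring
  have hch1 : ((n.choose (i+1)):ℝ) * ((i:ℝ)+1) = (n.choose i) * ((n:ℝ) - i) := by
    have := Nat.choose_succ_right_eq n i
    have hc : ((n.choose (i+1)):ℝ) * ((i:ℝ)+1) = ((n.choose i):ℝ) * (((n-i : ℕ)):ℝ) := by
      exact_mod_cast this
    rw [Nat.cast_sub h.le] at hc
    exact hc
  have hch2 : (n:ℝ) * ((n-1).choose i) = (n.choose (i+1)) * ((i:ℝ)+1) := by
    have := Nat.add_one_mul_choose_eq (n-1) i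
    rw [Nat.sub_add_cancel hn] at this
    exact_mod_cast congrArg (fun m : ℕ => (m:ℝ)) this
  have hinv : F * (n:ℝ) = ((n-1).factorial : ℝ)⁻¹ := by
    rw [hF]
    have hfac : (n:ℝ) * ((n-1).factorial : ℝ) = (n.factorial : ℝ) := by
      exact_mod_cast congrArg (fun m : ℕ => (m:ℝ)) (Nat.mul_factorial_pred (by omega))
    field_simp
    linarith [hfac]
  simp only [jpc, e1, e2, e3, e4, e5, ← hF]
  push_cast
  linear_combination (F*A*P*((n:ℝ)+μ+β+1+(i:ℝ)) - ((n:ℝ)+β)*F*A*P) * hch1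
    + ((n:ℝ)+β)*A*P*(((n-1).choose i : ℕ):ℝ)*hinv - ((n:ℝ)+β)*F*A*P*hch2

lemma key2 (μ β : ℝ) (n i : ℕ) (h : i + 1 ≤ n) :
    -((((i:ℝ)+1) + n + β + μ) * jpc μ β n i) - (((i:ℝ)+1)+μ) * jpc μ β n (i+1)
      = -((n:ℝ)+1) * jpc (μ-1) β (n+1) (i+1) := by
  have h1 : n - (i+1) = n - 1 - i := by omega
  have h2 : n - i = (n - 1 - i) + 1 := by omega
  have h3 : n + 1 - (i+1) = (n - 1 - i) + 1 := by omega
  set A := (ascPochhammer ℝ (n-1-i)).eval ((i:ℝ)+μ+2) with hA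
  set P := (ascPochhammer ℝ i).eval ((n:ℝ)+μ+β+1) with hP
  set F := ((n.factorial : ℝ))⁻¹ with hF
  have e1 : (ascPochhammer ℝ (n-(i+1))).eval (((i+1:ℕ):ℝ) + μ + 1) = A := by
    rw [h1, hA]; congr 1; push_cast; ring
  have e2 : (ascPochhammer ℝ (i+1)).eval ((n:ℝ) + μ + β + 1)
      = P * ((n:ℝ)+μ+β+1+i) := by rw [poch_succ_right, hP]
  have e3 : (ascPochhammer ℝ (n-i)).eval ((i:ℝ) + μ + 1)
      = ((i:ℝ)+μ+1) * A := by
    rw [h2, poch_succ_left, hA]; congr 2; ring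
  have e4 : (ascPochhammer ℝ (n+1-(i+1))).eval (((i+1:ℕ):ℝ) + (μ-1) + 1)
      = ((i:ℝ)+μ+1) * A := by
    rw [h3, poch_succ_left, hA]; congr 2 <;> push_cast <;> ring
  have e5 : (ascPochhammer ℝ (i+1)).eval (((n+1:ℕ):ℝ) + (μ-1) + β + 1)
      = P * ((n:ℝ)+μ+β+1+i) := by
    have : (((n+1:ℕ):ℝ)) + (μ-1) + β + 1 = (n:ℝ)+μ+β+1 := by push_cast; ring
    rw [this, poch_succ_right, hP]
  have hinv2 : (((n+1).factorial : ℝ))⁻¹ * ((n:ℝ)+1) = F := fac_succ_inv n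
  simp only [jpc, e1, e2, e3, e4, e5, ← hF, Nat.choose_succ_succ (n) (i)]
  push_cast
  linear_combination ((((n.choose i):ℝ)+((n.choose (i+1)):ℝ))*((i:ℝ)+μ+1)*A*P*((n:ℝ)+μ+β+1+(i:ℝ))) * hinv2

lemma key2a (μ β : ℝ) (n : ℕ) :
    -(μ * jpc μ β n 0) = -((n:ℝ)+1) * jpc (μ-1) β (n+1) 0 := by
  have v1 : jpc μ β n 0 = (n.factorial:ℝ)⁻¹ * (ascPochhammer ℝ n).eval (μ+1) := by
    simp [jpc]
  have v2 : jpc (μ-1) β (n+1) 0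
      = ((n+1).factorial:ℝ)⁻¹ * (μ * (ascPochhammer ℝ n).eval (μ+1)) := by
    have h : ((0:ℕ):ℝ) + (μ-1) + 1 = μ := by push_cast; ring
    simp only [jpc, Nat.sub_zero, Nat.choose_zero_right, Nat.cast_one, mul_one, one_mul,
      ascPochhammer_zero, Polynomial.eval_one, h]
    rw [poch_succ_left]
  rw [v1, v2]
  have hinv2 := fac_succ_inv n
  linear_combination (μ * (ascPochhammer ℝ n).eval (μ+1)) * hinv2

lemma key2b (μ β : ℝ) (n : ℕ) :
    -((((n:ℝ)+1) + n + β + μ) * jpc μ β n n) = -((n:ℝ)+1) * jpc (μ-1) β (n+1) (n+1) := by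
  set P := (ascPochhammer ℝ n).eval ((n:ℝ)+μ+β+1) with hP
  have v1 : jpc μ β n n = (n.factorial:ℝ)⁻¹ * P := by
    simp [jpc, hP]
  have v2 : jpc (μ-1) β (n+1) (n+1)
      = ((n+1).factorial:ℝ)⁻¹ * (P * ((n:ℝ)+μ+β+1+n)) := by
    have h : (((n+1):ℕ):ℝ) + (μ-1) + β + 1 = (n:ℝ)+μ+β+1 := by push_cast; ring
    simp only [jpc, Nat.sub_self, Nat.choose_self, Nat.cast_one, mul_one, one_mul,
      ascPochhammer_zero, Polynomial.eval_one, h, poch_succ_right, hP]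
  rw [v1, v2]
  have hinv2 := fac_succ_inv n
  linear_combination (P * ((n:ℝ)+μ+β+1+n)) * hinv2

lemma coeff_X1_deriv (q : Polynomial ℝ) (i : ℕ) :
    ((X + 1) * derivative q).coeff i = (i:ℝ) * q.coeff i + ((i:ℝ)+1) * q.coeff (i+1) := by
  rw [add_mul, one_mul, Polynomial.coeff_add]
  cases i with
  | zero =>
      rw [Polynomial.mul_coeff_zero, Polynomial.coeff_derivative, Polynomial.coeff_X_zero]
      push_cast; ring
  | succ m =>
      rw [Polynomial.coeff_X_mul, Polynomial.coeff_derivative, Polynomial.coeff_derivative]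
      push_cast; ring

lemma L1 (μ β : ℝ) (n : ℕ) (hn : 1 ≤ n) :
    (X + 1) * derivative (jp μ β n) - Polynomial.C (n:ℝ) * jp μ β n
      = Polynomial.C ((n:ℝ)+β) * jp (μ+1) β (n-1) := by
  ext i
  rw [Polynomial.coeff_sub, coeff_X1_deriv, Polynomial.coeff_C_mul, Polynomial.coeff_C_mul]
  simp only [jp_coeff]
  rcases lt_trichotomy i n with hlt | heq | hgt
  · rw [if_pos hlt.le, if_pos (by omega : i + 1 ≤ n), if_pos (by omega : i ≤ n - 1)]
    linear_combination key1 μ β n i hlt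
  · subst heq
    rw [if_pos le_rfl, if_neg (by omega), if_neg (by omega)]
    ring
  · rw [if_neg (by omega), if_neg (by omega), if_neg (by omega)]
    ring

lemma L2 (μ β : ℝ) (n : ℕ) :
    -(X * (X + 1)) * derivative (jp μ β n)
      - (Polynomial.C ((n:ℝ)+β+1) * X + Polynomial.C μ * (X + 1)) * jp μ β n
      = Polynomial.C (-((n:ℝ)+1)) * jp (μ-1) β (n+1) := by
  have expand : -(X * (X + 1)) * derivative (jp μ β n)
      - (Polynomial.C ((n:ℝ)+β+1) * X + Polynomial.C μ * (X + 1)) * jp μ β n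
      = -(X * ((X + 1) * derivative (jp μ β n)))
        - (Polynomial.C ((n:ℝ)+β+1) * (X * jp μ β n)
            + Polynomial.C μ * (X * jp μ β n) + Polynomial.C μ * jp μ β n) := by ring
  rw [expand]
  ext i
  rw [Polynomial.coeff_sub, Polynomial.coeff_neg, Polynomial.coeff_add, Polynomial.coeff_add,
    Polynomial.coeff_C_mul, Polynomial.coeff_C_mul, Polynomial.coeff_C_mul,
    Polynomial.coeff_C_mul]
  cases i with
  | zero =>
      rw [Polynomial.mul_coeff_zero, Polynomial.mul_coeff_zero, Polynomial.coeff_X_zero,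
        jp_coeff, jp_coeff, if_pos (Nat.zero_le n), if_pos (Nat.zero_le (n+1))]
      simpa using key2a μ β n
  | succ m =>
      rw [Polynomial.coeff_X_mul, Polynomial.coeff_X_mul, coeff_X1_deriv]
      rcases lt_trichotomy m n with hlt | heq | hgt
      · simp only [jp_coeff, if_pos (show m ≤ n by omega), if_pos (show m+1 ≤ n by omega),
          if_pos (show m+1 ≤ n+1 by omega)]
        linear_combination key2 μ β n m hlt
      · subst heq
        simp only [jp_coeff, if_pos (show m ≤ m by omega), if_neg (show ¬(m+1 ≤ m) by omega),
          if_pos (show m+1 ≤ m+1 by omega)]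
        push_cast
        linear_combination key2b μ β m
      · simp only [jp_coeff, if_neg (show ¬(m ≤ n) by omega), if_neg (show ¬(m+1 ≤ n) by omega),
          if_neg (show ¬(m+1 ≤ n+1) by omega)]
        ring

noncomputable def jacobiP (α β : ℝ) (n : ℕ) : Polynomial ℝ :=
  (n.factorial : ℝ)⁻¹ •
    ∑ k ∈ Finset.range (n + 1),
      ((n.choose k : ℝ) * ((ascPochhammer ℝ (n - k)).eval ((k : ℝ) + α + 1)) *
          ((ascPochhammer ℝ k).eval ((n : ℝ) + α + β + 1))) •
        ((Polynomial.X - 1) * Polynomial.C (2⁻¹ : ℝ)) ^ k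


noncomputable def zernikeQ (μ : ℝ) (k j : ℕ) : MvPolynomial (Fin 2) ℂ :=
  if j ≤ k then
    MvPolynomial.C ((((j.factorial : ℝ) / ((ascPochhammer ℝ j).eval (μ + 1)) : ℝ) : ℂ)) *
      MvPolynomial.X 0 ^ (k - j) *
      Polynomial.aeval (2 * MvPolynomial.X 0 * MvPolynomial.X 1 - 1)
        (jacobiP μ ((k - j : ℕ) : ℝ) j)
  else
    MvPolynomial.C ((((k.factorial : ℝ) / ((ascPochhammer ℝ k).eval (μ + 1)) : ℝ) : ℂ)) *
      MvPolynomial.X 1 ^ (j - k) *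
      Polynomial.aeval (2 * MvPolynomial.X 0 * MvPolynomial.X 1 - 1)
        (jacobiP μ ((j - k : ℕ) : ℝ) k)


noncomputable def uu : MvPolynomial (Fin 2) ℂ := MvPolynomial.X 0 * MvPolynomial.X 1 - 1

lemma halg (r : ℝ) :
    algebraMap ℝ (MvPolynomial (Fin 2) ℂ) r = MvPolynomial.C ((r : ℂ)) := rfl

lemma aeval_jp (α β : ℝ) (n : ℕ) (w : MvPolynomial (Fin 2) ℂ) :
    Polynomial.aeval w (jp α β n)
      = ∑ i ∈ Finset.range (n+1), MvPolynomial.C ((jpc α β n i : ℂ)) * w ^ i := by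
  rw [jp, map_sum]
  refine Finset.sum_congr rfl fun i _ => ?_
  rw [map_mul, map_pow, Polynomial.aeval_X, Polynomial.aeval_C, halg]

lemma aeval_jacobiP (α β : ℝ) (n : ℕ) :
    Polynomial.aeval (2 * MvPolynomial.X 0 * MvPolynomial.X 1 - 1 : MvPolynomial (Fin 2) ℂ)
        (jacobiP α β n)
      = Polynomial.aeval uu (jp α β n) := by
  have h2 : (MvPolynomial.C ((2⁻¹:ℝ):ℂ) : MvPolynomial (Fin 2) ℂ) * 2 = 1 := by
    rw [show (2 : MvPolynomial (Fin 2) ℂ) = MvPolynomial.C 2 from (map_ofNat MvPolynomial.C 2).symm,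
      ← map_mul]
    norm_num
  have hv : ((2 * MvPolynomial.X 0 * MvPolynomial.X 1 - 1 : MvPolynomial (Fin 2) ℂ) - 1)
      * MvPolynomial.C ((2⁻¹:ℝ):ℂ) = uu := by
    rw [uu]
    linear_combination (MvPolynomial.X 0 * MvPolynomial.X 1 - 1) * h2
  rw [aeval_jp, jacobiP, map_smul, map_sum, Finset.smul_sum]
  refine Finset.sum_congr rfl fun i _ => ?_
  rw [map_smul, map_pow, map_mul, map_sub, Polynomial.aeval_X, Polynomial.aeval_C,
    Polynomial.aeval_one, halg, hv]
  rw [Algebra.smul_def, Algebra.smul_def, halg, halg, ← mul_assoc, ← map_mul]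
  congr 1
  push_cast
  rw [jpc]
  push_cast
  ring

lemma pderiv_uu : MvPolynomial.pderiv (0 : Fin 2) uu = MvPolynomial.X 1 := by
  rw [uu]
  simp [MvPolynomial.pderiv_mul]

lemma pderiv_aeval_uu (q : Polynomial ℝ) :
    MvPolynomial.pderiv (0 : Fin 2) (Polynomial.aeval uu q)
      = Polynomial.aeval uu (derivative q) * MvPolynomial.X 1 := by
  induction q using Polynomial.induction_on' with
  | add p q hp hq => simp only [map_add, hp, hq]; ring
  | monomial m a =>
      rw [Polynomial.aeval_monomial, Polynomial.derivative_monomial, Polynomial.aeval_monomial,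
        halg, halg, MvPolynomial.pderiv_C_mul, MvPolynomial.pderiv_pow, pderiv_uu]
      push_cast
      rw [map_mul, map_natCast]
      ring

lemma hX01 : (MvPolynomial.X 0 * MvPolynomial.X 1 : MvPolynomial (Fin 2) ℂ)
    = Polynomial.aeval uu ((X : Polynomial ℝ) + 1) := by
  rw [map_add, Polynomial.aeval_X, Polynomial.aeval_one, uu]
  ring

lemma X0_pderiv_pow (a : ℕ) :
    (MvPolynomial.X 0 : MvPolynomial (Fin 2) ℂ) *
        MvPolynomial.pderiv (0 : Fin 2) (MvPolynomial.X 0 ^ a)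
      = (a : MvPolynomial (Fin 2) ℂ) * MvPolynomial.X 0 ^ a := by
  rw [MvPolynomial.pderiv_pow, MvPolynomial.pderiv_X_self, mul_one]
  cases a with
  | zero => simp
  | succ m =>
      rw [Nat.add_sub_cancel]
      push_cast
      ring

lemma castC (a : ℕ) :
    (MvPolynomial.C (((a:ℝ):ℂ)) : MvPolynomial (Fin 2) ℂ) = (a : MvPolynomial (Fin 2) ℂ) := by
  rw [show ((a:ℝ):ℂ) = (a:ℂ) by push_cast; rfl, map_natCast]

lemma X0_pderiv_prod (a : ℕ) (q : Polynomial ℝ) :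
    MvPolynomial.X 0 * MvPolynomial.pderiv (0 : Fin 2)
        (MvPolynomial.X 0 ^ a * Polynomial.aeval uu q)
      = MvPolynomial.X 0 ^ a
          * Polynomial.aeval uu (Polynomial.C ((a:ℝ)) * q + (X + 1) * derivative q) := by
  rw [MvPolynomial.pderiv_mul, pderiv_aeval_uu, map_add, map_mul, map_mul, Polynomial.aeval_C,
    halg]
  linear_combination (Polynomial.aeval uu q) * X0_pderiv_pow a
    + (MvPolynomial.X 0 ^ a * Polynomial.aeval uu (derivative q)) * hX01
    - (MvPolynomial.X 0 ^ a * Polynomial.aeval uu q) * castC a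

lemma X0_pderiv_prod' (b : ℕ) (q : Polynomial ℝ) :
    MvPolynomial.X 0 * MvPolynomial.pderiv (0 : Fin 2)
        (MvPolynomial.X 1 ^ b * Polynomial.aeval uu q)
      = MvPolynomial.X 1 ^ b * Polynomial.aeval uu ((X + 1) * derivative q) := by
  rw [MvPolynomial.pderiv_mul, pderiv_aeval_uu, MvPolynomial.pderiv_pow,
    MvPolynomial.pderiv_X_of_ne (by decide), map_mul]
  linear_combination (MvPolynomial.X 1 ^ b * Polynomial.aeval uu (derivative q)) * hX01


lemma scalar1 (μ : ℝ) (hμ : -1 < μ) (n : ℕ) (hn : 1 ≤ n) (m : ℝ) :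
    ((n.factorial:ℝ)/((ascPochhammer ℝ n).eval (μ+1))) * m
      = (m*(n:ℝ)/(μ+1)) * (((n-1).factorial:ℝ)/((ascPochhammer ℝ (n-1)).eval (μ+1+1))) := by
  have h1 : (ascPochhammer ℝ n).eval (μ+1) = (μ+1) * (ascPochhammer ℝ (n-1)).eval (μ+1+1) := by
    conv_lhs => rw [show n = (n-1)+1 by omega]
    rw [poch_succ_left]
  have h2 : (n.factorial:ℝ) = n * ((n-1).factorial:ℝ) := by
    exact_mod_cast (congrArg (fun m:ℕ => (m:ℝ)) (Nat.mul_factorial_pred (by omega))).symm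
  have hp : (0:ℝ) < (ascPochhammer ℝ (n-1)).eval (μ+1+1) := ascPochhammer_pos _ _ (by linarith)
  have hμ1 : μ+1 ≠ 0 := by linarith
  have hn0 : (0:ℝ) < (n:ℝ) := by exact_mod_cast hn
  rw [h1, h2]
  field_simp

lemma scalar2 (μ : ℝ) (hμ : 0 < μ) (n : ℕ) :
    ((n.factorial:ℝ)/((ascPochhammer ℝ n).eval (μ+1))) * ((n:ℝ)+1)
      = μ * (((n+1).factorial:ℝ)/((ascPochhammer ℝ (n+1)).eval (μ-1+1))) := by
  have h1 : (ascPochhammer ℝ (n+1)).eval (μ-1+1) = μ * (ascPochhammer ℝ n).eval (μ+1) := by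
    rw [show μ-1+1 = μ by ring, poch_succ_left]
  have h2 : ((n+1).factorial:ℝ) = ((n:ℝ)+1) * (n.factorial:ℝ) := by
    rw [Nat.factorial_succ]; push_cast; ring
  have hp : 0 < (ascPochhammer ℝ n).eval (μ+1) := ascPochhammer_pos _ _ (by linarith)
  rw [h1, h2]
  field_simp

end Helpers

open MvPolynomial in
theorem zernike_ladder_Z7 (μ : ℝ) (k j : ℕ) :
    (μ > -1 → 1 ≤ k → 1 ≤ j →
      X 0 * pderiv (0 : Fin 2) (zernikeQ μ k j) - C (((k : ℝ)) : ℂ) * zernikeQ μ k j =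
        C ((((k : ℝ) * (j : ℝ) / (μ + 1) : ℝ)) : ℂ) * zernikeQ (μ + 1) (k - 1) (j - 1)) ∧
    (μ > 0 →
      (1 - X 0 * X 1) * (X 0 * pderiv (0 : Fin 2) (zernikeQ μ k j)) +
          (C ((((j : ℝ) + 1 : ℝ)) : ℂ) * (1 - X 0 * X 1) -
            C ((μ : ℂ)) * (X 0 * X 1)) * zernikeQ μ k j =
        -(C ((μ : ℂ)) * zernikeQ (μ - 1) (k + 1) (j + 1))) := by
  have hone : (1 - X 0 * X 1 : MvPolynomial (Fin 2) ℂ) = -uu := by rw [uu]; ring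
  have hxx : (X 0 * X 1 : MvPolynomial (Fin 2) ℂ) = uu + 1 := by rw [uu]; ring
  constructor
  · -- Part 1
    intro hμ hk hj
    by_cases hjk : j ≤ k
    · -- j ≤ k
      have hQ : zernikeQ μ k j
          = C (((j.factorial : ℝ) / ((ascPochhammer ℝ j).eval (μ + 1)) : ℝ) : ℂ)
            * (X 0 ^ (k - j) * Polynomial.aeval uu (jp μ ((k - j : ℕ) : ℝ) j)) := by
        rw [zernikeQ, if_pos hjk, aeval_jacobiP, mul_assoc]
      have hQ' : zernikeQ (μ+1) (k-1) (j-1)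
          = C ((((j-1).factorial : ℝ) / ((ascPochhammer ℝ (j-1)).eval ((μ+1) + 1)) : ℝ) : ℂ)
            * (X 0 ^ (k - j) * Polynomial.aeval uu (jp (μ+1) ((k - j : ℕ) : ℝ) (j-1))) := by
        rw [zernikeQ, if_pos (by omega : j - 1 ≤ k - 1),
          show (k-1) - (j-1) = k - j from by omega, aeval_jacobiP, mul_assoc]
      have hpoly : Polynomial.C (((k - j : ℕ) : ℝ)) * jp μ ((k - j : ℕ) : ℝ) j
            + (Polynomial.X + 1) * Polynomial.derivative (jp μ ((k - j : ℕ) : ℝ) j)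
            - Polynomial.C ((k : ℝ)) * jp μ ((k - j : ℕ) : ℝ) j
          = Polynomial.C ((k : ℝ)) * jp (μ+1) ((k - j : ℕ) : ℝ) (j-1) := by
        have hL1 := L1 μ ((k - j : ℕ) : ℝ) j hj
        rw [show (j : ℝ) + ((k - j : ℕ) : ℝ) = (k : ℝ) from by rw [Nat.cast_sub hjk]; ring] at hL1
        have hc1 : Polynomial.C (((k - j : ℕ) : ℝ))
            = Polynomial.C ((k : ℝ)) - Polynomial.C ((j : ℝ)) := by
          rw [← map_sub, Nat.cast_sub hjk]
        linear_combination hL1 + (jp μ ((k - j : ℕ) : ℝ) j) * hc1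
      have hD := X0_pderiv_prod (k - j) (jp μ ((k - j : ℕ) : ℝ) j)
      have hL := congrArg (Polynomial.aeval uu) hpoly
      have hsC : (C (((j.factorial : ℝ) / ((ascPochhammer ℝ j).eval (μ + 1)) : ℝ) : ℂ)
              : MvPolynomial (Fin 2) ℂ)
            * C (((k : ℝ) : ℂ))
          = C ((((k : ℝ) * (j : ℝ) / (μ + 1) : ℝ)) : ℂ)
            * C ((((j-1).factorial : ℝ) / ((ascPochhammer ℝ (j-1)).eval ((μ+1) + 1)) : ℝ) : ℂ) := by
        rw [← map_mul, ← map_mul]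
        congr 1
        exact_mod_cast scalar1 μ hμ j hj ((k : ℝ))
      rw [hQ, hQ', MvPolynomial.pderiv_C_mul]
      simp only [map_add, map_mul, map_sub, map_one, Polynomial.aeval_C, Polynomial.aeval_X,
        halg] at hL hD
      linear_combination
        (C (((j.factorial : ℝ) / ((ascPochhammer ℝ j).eval (μ + 1)) : ℝ) : ℂ)) * hD
        + (C (((j.factorial : ℝ) / ((ascPochhammer ℝ j).eval (μ + 1)) : ℝ) : ℂ)
            * X 0 ^ (k - j)) * hL
        + (X 0 ^ (k - j) * Polynomial.aeval uu (jp (μ+1) ((k - j : ℕ) : ℝ) (j-1))) * hsC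
    · -- k < j
      have hkj : k < j := by omega
      have hQ : zernikeQ μ k j
          = C (((k.factorial : ℝ) / ((ascPochhammer ℝ k).eval (μ + 1)) : ℝ) : ℂ)
            * (X 1 ^ (j - k) * Polynomial.aeval uu (jp μ ((j - k : ℕ) : ℝ) k)) := by
        rw [zernikeQ, if_neg hjk, aeval_jacobiP, mul_assoc]
      have hQ' : zernikeQ (μ+1) (k-1) (j-1)
          = C ((((k-1).factorial : ℝ) / ((ascPochhammer ℝ (k-1)).eval ((μ+1) + 1)) : ℝ) : ℂ)
            * (X 1 ^ (j - k) * Polynomial.aeval uu (jp (μ+1) ((j - k : ℕ) : ℝ) (k-1))) := by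
        rw [zernikeQ, if_neg (by omega : ¬ (j - 1 ≤ k - 1)),
          show (j-1) - (k-1) = j - k from by omega, aeval_jacobiP, mul_assoc]
      have hpoly : (Polynomial.X + 1) * Polynomial.derivative (jp μ ((j - k : ℕ) : ℝ) k)
            - Polynomial.C ((k : ℝ)) * jp μ ((j - k : ℕ) : ℝ) k
          = Polynomial.C ((j : ℝ)) * jp (μ+1) ((j - k : ℕ) : ℝ) (k-1) := by
        have hL1 := L1 μ ((j - k : ℕ) : ℝ) k hk
        rw [show (k : ℝ) + ((j - k : ℕ) : ℝ) = (j : ℝ) from by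
          rw [Nat.cast_sub hkj.le]; ring] at hL1
        exact hL1
      have hD := X0_pderiv_prod' (j - k) (jp μ ((j - k : ℕ) : ℝ) k)
      have hL := congrArg (Polynomial.aeval uu) hpoly
      have hsC : (C (((k.factorial : ℝ) / ((ascPochhammer ℝ k).eval (μ + 1)) : ℝ) : ℂ)
              : MvPolynomial (Fin 2) ℂ)
            * C (((j : ℝ) : ℂ))
          = C ((((k : ℝ) * (j : ℝ) / (μ + 1) : ℝ)) : ℂ)
            * C ((((k-1).factorial : ℝ) / ((ascPochhammer ℝ (k-1)).eval ((μ+1) + 1)) : ℝ) : ℂ) := by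
        rw [← map_mul, ← map_mul]
        congr 1
        have hr : ((k.factorial : ℝ) / ((ascPochhammer ℝ k).eval (μ + 1))) * (j : ℝ)
            = ((k : ℝ) * (j : ℝ) / (μ + 1))
              * (((k-1).factorial : ℝ) / ((ascPochhammer ℝ (k-1)).eval (μ+1+1))) := by
          linear_combination scalar1 μ hμ k hk ((j : ℝ))
        exact_mod_cast hr
      rw [hQ, hQ', MvPolynomial.pderiv_C_mul]
      simp only [map_add, map_mul, map_sub, map_one, Polynomial.aeval_C, Polynomial.aeval_X,
        halg] at hL hD
      linear_combination
        (C (((k.factorial : ℝ) / ((ascPochhammer ℝ k).eval (μ + 1)) : ℝ) : ℂ)) * hD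
        + (C (((k.factorial : ℝ) / ((ascPochhammer ℝ k).eval (μ + 1)) : ℝ) : ℂ)
            * X 1 ^ (j - k)) * hL
        + (X 1 ^ (j - k) * Polynomial.aeval uu (jp (μ+1) ((j - k : ℕ) : ℝ) (k-1))) * hsC
  · -- Part 2
    intro hμ2
    by_cases hjk : j ≤ k
    · -- j ≤ k
      have hQ : zernikeQ μ k j
          = C (((j.factorial : ℝ) / ((ascPochhammer ℝ j).eval (μ + 1)) : ℝ) : ℂ)
            * (X 0 ^ (k - j) * Polynomial.aeval uu (jp μ ((k - j : ℕ) : ℝ) j)) := by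
        rw [zernikeQ, if_pos hjk, aeval_jacobiP, mul_assoc]
      have hQ' : zernikeQ (μ-1) (k+1) (j+1)
          = C ((((j+1).factorial : ℝ) / ((ascPochhammer ℝ (j+1)).eval ((μ-1) + 1)) : ℝ) : ℂ)
            * (X 0 ^ (k - j) * Polynomial.aeval uu (jp (μ-1) ((k - j : ℕ) : ℝ) (j+1))) := by
        rw [zernikeQ, if_pos (by omega : j + 1 ≤ k + 1),
          show (k+1) - (j+1) = k - j from by omega, aeval_jacobiP, mul_assoc]
      have hpoly : (-Polynomial.X) * (Polynomial.C (((k - j : ℕ) : ℝ)) * jp μ ((k - j : ℕ) : ℝ) j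
              + (Polynomial.X + 1) * Polynomial.derivative (jp μ ((k - j : ℕ) : ℝ) j))
            + (Polynomial.C ((j : ℝ) + 1) * (-Polynomial.X)
                - Polynomial.C μ * (Polynomial.X + 1)) * jp μ ((k - j : ℕ) : ℝ) j
          = Polynomial.C (-((j : ℝ) + 1)) * jp (μ-1) ((k - j : ℕ) : ℝ) (j+1) := by
        have hL2 := L2 μ ((k - j : ℕ) : ℝ) j
        have hsplit : Polynomial.C ((j : ℝ) + ((k - j : ℕ) : ℝ) + 1)
            = Polynomial.C (((k - j : ℕ) : ℝ)) + Polynomial.C ((j : ℝ) + 1) := by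
          rw [show (j : ℝ) + ((k - j : ℕ) : ℝ) + 1 = ((k - j : ℕ) : ℝ) + ((j : ℝ) + 1) by ring,
            map_add]
        linear_combination hL2 + (Polynomial.X * jp μ ((k - j : ℕ) : ℝ) j) * hsplit
      have hD := X0_pderiv_prod (k - j) (jp μ ((k - j : ℕ) : ℝ) j)
      have hL := congrArg (Polynomial.aeval uu) hpoly
      have hsC : (C (((j.factorial : ℝ) / ((ascPochhammer ℝ j).eval (μ + 1)) : ℝ) : ℂ)
              : MvPolynomial (Fin 2) ℂ)
            * C ((((j : ℝ) + 1 : ℝ)) : ℂ)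
          = C ((μ : ℂ))
            * C ((((j+1).factorial : ℝ) / ((ascPochhammer ℝ (j+1)).eval ((μ-1) + 1)) : ℝ) : ℂ) := by
        rw [← map_mul, ← map_mul]
        congr 1
        exact_mod_cast scalar2 μ hμ2 j
      rw [hQ, hQ', MvPolynomial.pderiv_C_mul, hone, hxx]
      simp only [map_add, map_mul, map_sub, map_neg, map_one, map_natCast, Polynomial.aeval_C,
        Polynomial.aeval_X, halg, Complex.ofReal_add, Complex.ofReal_one, Complex.ofReal_neg,
        Complex.ofReal_natCast] at hL hD hsC ⊢
      linear_combination
        ((-uu) * C (((j.factorial : ℝ) / ((ascPochhammer ℝ j).eval (μ + 1)) : ℝ) : ℂ)) * hD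
        + (C (((j.factorial : ℝ) / ((ascPochhammer ℝ j).eval (μ + 1)) : ℝ) : ℂ)
            * X 0 ^ (k - j)) * hL
        - (X 0 ^ (k - j) * Polynomial.aeval uu (jp (μ-1) ((k - j : ℕ) : ℝ) (j+1))) * hsC
    · -- k < j
      have hkj : k < j := by omega
      have hQ : zernikeQ μ k j
          = C (((k.factorial : ℝ) / ((ascPochhammer ℝ k).eval (μ + 1)) : ℝ) : ℂ)
            * (X 1 ^ (j - k) * Polynomial.aeval uu (jp μ ((j - k : ℕ) : ℝ) k)) := by
        rw [zernikeQ, if_neg hjk, aeval_jacobiP, mul_assoc]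
      have hQ' : zernikeQ (μ-1) (k+1) (j+1)
          = C ((((k+1).factorial : ℝ) / ((ascPochhammer ℝ (k+1)).eval ((μ-1) + 1)) : ℝ) : ℂ)
            * (X 1 ^ (j - k) * Polynomial.aeval uu (jp (μ-1) ((j - k : ℕ) : ℝ) (k+1))) := by
        rw [zernikeQ, if_neg (by omega : ¬ (j + 1 ≤ k + 1)),
          show (j+1) - (k+1) = j - k from by omega, aeval_jacobiP, mul_assoc]
      have hpoly : (-Polynomial.X) * ((Polynomial.X + 1)
              * Polynomial.derivative (jp μ ((j - k : ℕ) : ℝ) k))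
            + (Polynomial.C ((j : ℝ) + 1) * (-Polynomial.X)
                - Polynomial.C μ * (Polynomial.X + 1)) * jp μ ((j - k : ℕ) : ℝ) k
          = Polynomial.C (-((k : ℝ) + 1)) * jp (μ-1) ((j - k : ℕ) : ℝ) (k+1) := by
        have hL2 := L2 μ ((j - k : ℕ) : ℝ) k
        rw [show (k : ℝ) + ((j - k : ℕ) : ℝ) + 1 = (j : ℝ) + 1 from by
          rw [Nat.cast_sub hkj.le]; ring] at hL2
        linear_combination hL2
      have hD := X0_pderiv_prod' (j - k) (jp μ ((j - k : ℕ) : ℝ) k)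
      have hL := congrArg (Polynomial.aeval uu) hpoly
      have hsC : (C (((k.factorial : ℝ) / ((ascPochhammer ℝ k).eval (μ + 1)) : ℝ) : ℂ)
              : MvPolynomial (Fin 2) ℂ)
            * C ((((k : ℝ) + 1 : ℝ)) : ℂ)
          = C ((μ : ℂ))
            * C ((((k+1).factorial : ℝ) / ((ascPochhammer ℝ (k+1)).eval ((μ-1) + 1)) : ℝ) : ℂ) := by
        rw [← map_mul, ← map_mul]
        congr 1
        exact_mod_cast scalar2 μ hμ2 k
      rw [hQ, hQ', MvPolynomial.pderiv_C_mul, hone, hxx]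
      simp only [map_add, map_mul, map_sub, map_neg, map_one, map_natCast, Polynomial.aeval_C,
        Polynomial.aeval_X, halg, Complex.ofReal_add, Complex.ofReal_one, Complex.ofReal_neg,
        Complex.ofReal_natCast] at hL hD hsC ⊢
      linear_combination
        ((-uu) * C (((k.factorial : ℝ) / ((ascPochhammer ℝ k).eval (μ + 1)) : ℝ) : ℂ)) * hD
        + (C (((k.factorial : ℝ) / ((ascPochhammer ℝ k).eval (μ + 1)) : ℝ) : ℂ)
            * X 1 ^ (j - k)) * hL
        - (X 1 ^ (j - k) * Polynomial.aeval uu (jp (μ-1) ((j - k : ℕ) : ℝ) (k+1))) * hsC
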